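/- arXiv:2005.07938 — 2 statements merged into one kernel-verified Lean document; each statement's English description precedes it below -/
import Mathlib

section
/- Let d ≥ 2, 0 < δ < 1 and r ≥ 0. Then (1/2)·[ C_{d,(2δ−1)·1, 2r} + C_{d,A, 2r} ] ≤ C_d(D(d,δ), r) ≤ C_{d,(2δ−1)·1, 2r}, where A = (2δ+1, 2δ−1, 2δ−1, …, 2δ−1) ∈ ℝ^d. -/
open MeasureTheory Filter

noncomputable section

/-- The cube `[-1,1]^d` in `ℝ^d`. -/
def cube (d : ℕ) : Set (EuclideanSpace ℝ (Fin d)) := {x | ∀ i, x i ∈ Set.Icc (-1 : ℝ) 1}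

/-- The constant vector `(c,…,c) ∈ ℝ^d`. -/
def const (d : ℕ) (c : ℝ) : EuclideanSpace ℝ (Fin d) := WithLp.toLp 2 (fun _ => c)

/-- The design `D(d,δ)`: the `2^{d-1}` points `δ·ε`, `ε` a sign vector with an even
number of `-1` entries. -/
def design (d : ℕ) (δ : ℝ) : Set (EuclideanSpace ℝ (Fin d)) :=
  {z | ∃ ε : Fin d → ℝ, (∀ i, ε i = 1 ∨ ε i = -1) ∧ Even {i | ε i = -1}.ncard ∧
        z = fun i => δ * ε i}

/-- `C_{d,z,ρ}`: fraction of the cube `[-1,1]^d` covered by the closed ball `B(z,ρ)`. -/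
def coverOne (d : ℕ) (z : EuclideanSpace ℝ (Fin d)) (ρ : ℝ) : ℝ :=
  (volume (cube d ∩ Metric.closedBall z ρ)).toReal / 2 ^ d

/-- `C_d(Z,r)`: fraction of the cube `[-1,1]^d` covered by the union of balls of
radius `r` centred at points of `Z`. -/
def cover (d : ℕ) (Z : Set (EuclideanSpace ℝ (Fin d))) (r : ℝ) : ℝ :=
  (volume (cube d ∩ ⋃ z ∈ Z, Metric.closedBall z r)).toReal / 2 ^ d

/-- Mean squared quantization error `θ(Z)`. -/
def quantErr (d : ℕ) (Z : Set (EuclideanSpace ℝ (Fin d))) : ℝ :=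
  (∫ x in cube d, ⨅ z : Z, ‖x - (z : EuclideanSpace ℝ (Fin d))‖ ^ 2) / 2 ^ d

/-- The cube `C_0 = [0,1]^d`. -/
def C0 (d : ℕ) : Set (EuclideanSpace ℝ (Fin d)) := {x | ∀ i, x i ∈ Set.Icc (0 : ℝ) 1}

/-- The set `U_j`. -/
def U (d : ℕ) (j : Fin d) : Set (EuclideanSpace ℝ (Fin d)) :=
  {x | -1 ≤ x j ∧ x j ≤ 0 ∧ ∀ k, k ≠ j → |x j| ≤ x k ∧ x k ≤ 1}

/-! ### Auxiliary machinery -/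

open Set

/-- The folding map `x ↦ (2|x_i| - 1)_i`. -/
def psiE (d : ℕ) (x : EuclideanSpace ℝ (Fin d)) : EuclideanSpace ℝ (Fin d) :=
  WithLp.toLp 2 (fun i => 2 * |x i| - 1)

/-- Reinterpret a set of Euclidean vectors as a set of bare functions. -/
def toPi (d : ℕ) (S : Set (EuclideanSpace ℝ (Fin d))) : Set (Fin d → ℝ) := WithLp.toLp 2 ⁻¹' S

/-- The folding map as a map of bare functions. -/
def psiPi (d : ℕ) : (Fin d → ℝ) → (Fin d → ℝ) :=
  fun f => WithLp.ofLp (psiE d (WithLp.toLp 2 f))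

/-- Reflection of the 0-th coordinate. -/
def reflE (d : ℕ) (x : EuclideanSpace ℝ (Fin d)) : EuclideanSpace ℝ (Fin d) :=
  WithLp.toLp 2 (fun i : Fin d => if (i : ℕ) = 0 then -(x i) else x i)

def reflPi (d : ℕ) : (Fin d → ℝ) → (Fin d → ℝ) :=
  fun f => WithLp.ofLp (reflE d (WithLp.toLp 2 f))

/-- Number of negative coordinates. -/
def nneg (d : ℕ) (x : EuclideanSpace ℝ (Fin d)) : ℕ :=
  ∑ i, if x i < 0 then 1 else 0

def nnegPi (d : ℕ) : (Fin d → ℝ) → ℕ := fun f => nneg d (WithLp.toLp 2 f)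

/-- The even-parity part of the cube (with no vanishing coordinate). -/
def Eset (d : ℕ) : Set (EuclideanSpace ℝ (Fin d)) :=
  {x | x ∈ cube d ∧ (∀ i, x i ≠ 0) ∧ Even (nneg d x)}

/-- The odd-parity part of the cube (with no vanishing coordinate). -/
def Oset (d : ℕ) : Set (EuclideanSpace ℝ (Fin d)) :=
  {x | x ∈ cube d ∧ (∀ i, x i ≠ 0) ∧ ¬ Even (nneg d x)}

lemma psiPi_measurable (d : ℕ) : Measurable (psiPi d) := by
  refine measurable_pi_iff.mpr fun i => ?_
  show Measurable fun x : Fin d → ℝ => 2 * |x i| - 1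
  exact (((measurable_pi_apply i).abs).const_mul 2).sub measurable_const

lemma cube_eq_pi (d : ℕ) : toPi d (cube d) = Set.pi Set.univ (fun _ => Icc (-1:ℝ) 1) := by
  ext x
  constructor
  · intro h i _; exact h i
  · intro h i; exact h i (Set.mem_univ i)

lemma cubePi_measurable (d : ℕ) : MeasurableSet (toPi d (cube d)) := by
  rw [cube_eq_pi]; exact MeasurableSet.univ_pi fun _ => measurableSet_Icc

lemma cube_measurable (d : ℕ) : MeasurableSet (cube d) := WithLp.measurable_ofLp 2 (Fin d → ℝ) (cubePi_measurable d)

lemma toPi_meas (d : ℕ) (S : Set (EuclideanSpace ℝ (Fin d))) (hS : MeasurableSet S) :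
    MeasurableSet (toPi d S) := WithLp.measurable_toLp 2 (Fin d → ℝ) hS

lemma psiE_measurable (d : ℕ) : Measurable (psiE d) :=
  (WithLp.measurable_toLp 2 (Fin d → ℝ)).comp ((psiPi_measurable d).comp (WithLp.measurable_ofLp 2 (Fin d → ℝ)))

lemma pi_restrict (d : ℕ) :
    (volume : Measure (Fin d → ℝ)).restrict (Set.pi Set.univ (fun _ => Icc (-1:ℝ) 1))
      = Measure.pi (fun _ : Fin d => volume.restrict (Icc (-1:ℝ) 1)) := by
  have h : ∀ s : Fin d → Set ℝ, (∀ i, MeasurableSet (s i)) →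
      (volume : Measure (Fin d → ℝ)).restrict (Set.pi Set.univ fun _ => Icc (-1:ℝ) 1)
        (Set.pi Set.univ s) = ∏ i, (volume.restrict (Icc (-1:ℝ) 1)) (s i) := by
    intro s hs
    rw [Measure.restrict_apply (MeasurableSet.univ_pi hs), ← Set.pi_inter_distrib, volume_pi,
      Measure.pi_pi]
    simp only [Measure.restrict_apply (hs _)]
  exact (Measure.pi_eq h).symm

lemma map_affine (a b : ℝ) (ha : a ≠ 0) :
    Measure.map (fun t : ℝ => a * t + b) volume = ENNReal.ofReal |a⁻¹| • volume := by
  have hg : Measurable fun u : ℝ => u + b := by fun_prop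
  have hf : Measurable fun t : ℝ => a * t := by fun_prop
  have : (fun t : ℝ => a * t + b) = (fun u : ℝ => u + b) ∘ (fun t : ℝ => a * t) := rfl
  rw [this, ← Measure.map_map hg hf,
    Real.map_volume_mul_left ha, Measure.map_smul,
    (measurePreserving_add_right volume b).map_eq]

lemma aux_half (a b : ℝ) (ha : a ≠ 0) (s : Set ℝ)
    (hpre : (fun t : ℝ => a * t + b) ⁻¹' (Icc (-1 : ℝ) 1) = s) :
    Measure.map (fun t : ℝ => a * t + b) (volume.restrict s)
      = ENNReal.ofReal |a⁻¹| • volume.restrict (Icc (-1 : ℝ) 1) := by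
  rw [← hpre, ← Measure.restrict_map (by fun_prop) measurableSet_Icc, map_affine _ _ ha,
    Measure.restrict_smul]

lemma oneDim : MeasurePreserving (fun t : ℝ => 2 * |t| - 1)
    (volume.restrict (Icc (-1 : ℝ) 1)) (volume.restrict (Icc (-1 : ℝ) 1)) := by
  have hmeas : Measurable (fun t : ℝ => 2 * |t| - 1) := by fun_prop
  refine ⟨hmeas, ?_⟩
  have hdisj : Disjoint (Icc (-1 : ℝ) 0) (Ioc (0 : ℝ) 1) := by
    rw [Set.disjoint_left]
    rintro x ⟨_, h2⟩ ⟨h3, _⟩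
    linarith
  have hsplit : volume.restrict (Icc (-1 : ℝ) 1)
      = volume.restrict (Icc (-1 : ℝ) 0) + volume.restrict (Ioc (0 : ℝ) 1) := by
    rw [← Measure.restrict_union hdisj measurableSet_Ioc,
      Set.Icc_union_Ioc_eq_Icc (by norm_num) (by norm_num)]
  rw [hsplit, Measure.map_add _ _ hmeas]
  have h1 : Measure.map (fun t : ℝ => 2 * |t| - 1) (volume.restrict (Icc (-1 : ℝ) 0))
      = ENNReal.ofReal |(-2 : ℝ)⁻¹| • volume.restrict (Icc (-1 : ℝ) 1) := by
    have heq : Measure.map (fun t : ℝ => 2 * |t| - 1) (volume.restrict (Icc (-1 : ℝ) 0))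
        = Measure.map (fun t : ℝ => -2 * t + -1) (volume.restrict (Icc (-1 : ℝ) 0)) := by
      refine Measure.map_congr ?_
      filter_upwards [ae_restrict_mem measurableSet_Icc] with t ht
      rw [abs_of_nonpos ht.2]; ring
    rw [heq]
    refine aux_half _ _ (by norm_num) _ ?_
    ext t
    simp only [mem_preimage, mem_Icc]
    constructor <;> intro h <;> exact ⟨by linarith [h.1, h.2], by linarith [h.1, h.2]⟩
  have h2 : Measure.map (fun t : ℝ => 2 * |t| - 1) (volume.restrict (Ioc (0 : ℝ) 1))
      = ENNReal.ofReal |(2 : ℝ)⁻¹| • volume.restrict (Icc (-1 : ℝ) 1) := by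
    have heq : Measure.map (fun t : ℝ => 2 * |t| - 1) (volume.restrict (Ioc (0 : ℝ) 1))
        = Measure.map (fun t : ℝ => 2 * t + -1) (volume.restrict (Ioc (0 : ℝ) 1)) := by
      refine Measure.map_congr ?_
      filter_upwards [ae_restrict_mem measurableSet_Ioc] with t ht
      rw [abs_of_pos ht.1]; ring
    have hres : volume.restrict (Ioc (0 : ℝ) 1) = volume.restrict (Icc (0 : ℝ) 1) :=
      Measure.restrict_congr_set Ioc_ae_eq_Icc
    have hpre : (fun t : ℝ => 2 * t + -1) ⁻¹' (Icc (-1 : ℝ) 1) = Icc (0 : ℝ) 1 := by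
      ext t
      simp only [mem_preimage, mem_Icc]
      constructor <;> intro h <;> exact ⟨by linarith [h.1, h.2], by linarith [h.1, h.2]⟩
    rw [heq, hres]
    exact aux_half _ _ (by norm_num) _ hpre
  rw [h1, h2, ← add_smul]
  have : ENNReal.ofReal |(-2 : ℝ)⁻¹| + ENNReal.ofReal |(2 : ℝ)⁻¹| = 1 := by
    rw [← ENNReal.ofReal_add (abs_nonneg _) (abs_nonneg _)]
    norm_num [abs_of_nonneg]
  rw [this, one_smul]
  exact hsplit

/-- transfer of volume from Euclidean to pi. -/
lemma vol_toPi (d : ℕ) (S : Set (EuclideanSpace ℝ (Fin d))) (hS : MeasurableSet S) :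
    volume S = (volume : Measure (Fin d → ℝ)) (toPi d S) :=
  (EuclideanSpace.volume_preserving_symm_measurableEquiv_toLp (Fin d)).measure_preimage
    (toPi_meas d S hS).nullMeasurableSet

lemma volA (d : ℕ) (S : Set (EuclideanSpace ℝ (Fin d))) (hS : MeasurableSet S) :
    volume (cube d ∩ psiE d ⁻¹' S) = volume (cube d ∩ S) := by
  have hSpi : MeasurableSet (toPi d S) := toPi_meas d S hS
  have hpsi : MeasurePreserving (psiPi d)
      (Measure.pi (fun _ : Fin d => volume.restrict (Icc (-1:ℝ) 1)))
      (Measure.pi (fun _ : Fin d => volume.restrict (Icc (-1:ℝ) 1))) :=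
    measurePreserving_pi _ _ (fun _ => oneDim)
  have hpre : MeasurableSet (psiPi d ⁻¹' (toPi d S)) :=
    psiPi_measurable d hSpi
  have key : (volume : Measure (Fin d → ℝ)) ((psiPi d ⁻¹' toPi d S) ∩ toPi d (cube d))
      = (volume : Measure (Fin d → ℝ)) (toPi d S ∩ toPi d (cube d)) := by
    rw [← Measure.restrict_apply hpre, ← Measure.restrict_apply hSpi, cube_eq_pi, pi_restrict]
    exact hpsi.measure_preimage hSpi.nullMeasurableSet
  rw [vol_toPi d _ ((cube_measurable d).inter
      (psiE_measurable d hS)),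
    vol_toPi d _ ((cube_measurable d).inter hS)]
  calc (volume : Measure (Fin d → ℝ)) (toPi d (cube d ∩ psiE d ⁻¹' S))
      = (volume : Measure (Fin d → ℝ)) ((psiPi d ⁻¹' toPi d S) ∩ toPi d (cube d)) := by
        rw [Set.inter_comm]; rfl
    _ = (volume : Measure (Fin d → ℝ)) (toPi d S ∩ toPi d (cube d)) := key
    _ = (volume : Measure (Fin d → ℝ)) (toPi d (cube d ∩ S)) := by rw [Set.inter_comm]; rfl

lemma reflPi_measurable (d : ℕ) : Measurable (reflPi d) := by
  refine measurable_pi_iff.mpr fun i => ?_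
  unfold reflPi reflE
  by_cases h : (i : ℕ) = 0 <;> simp only [h, if_true, if_false, reduceIte]
  · exact (measurable_pi_apply i).neg
  · exact measurable_pi_apply i

lemma reflPi_mp (d : ℕ) : MeasurePreserving (reflPi d)
    (volume : Measure (Fin d → ℝ)) volume := by
  have h1 : MeasurePreserving (fun (a : Fin d → ℝ) (i : Fin d) =>
      (fun t : ℝ => if (i : ℕ) = 0 then -t else t) (a i)) volume volume := by
    rw [volume_pi]
    refine measurePreserving_pi (fun _ => (volume : Measure ℝ)) (fun _ => (volume : Measure ℝ))
      (f := fun (i : Fin d) (t : ℝ) => if (i : ℕ) = 0 then -t else t) fun i => ?_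
    by_cases h : (i : ℕ) = 0
    · simpa [h] using Measure.measurePreserving_neg (volume : Measure ℝ)
    · simp only [h, ↓reduceIte]; exact MeasurePreserving.id _
  have hfun : reflPi d = fun (a : Fin d → ℝ) (i : Fin d) =>
      (fun t : ℝ => if (i : ℕ) = 0 then -t else t) (a i) := by
    funext x i
    unfold reflPi reflE
    by_cases h : (i : ℕ) = 0 <;> simp [h]
  rw [hfun]
  exact h1

lemma reflE_mp (d : ℕ) :
    MeasurePreserving (reflE d) (volume : Measure (EuclideanSpace ℝ (Fin d))) volume := by
  exact (PiLp.volume_preserving_toLp (Fin d)).comp ((reflPi_mp d).comp (PiLp.volume_preserving_ofLp (Fin d)))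

lemma ncard_eq_nneg (d : ℕ) (x : EuclideanSpace ℝ (Fin d)) :
    {i | x i < 0}.ncard = nneg d x := by
  have : {i | x i < 0} = ↑(Finset.univ.filter fun i : Fin d => x i < 0) := by
    ext i; simp
  rw [this, Set.ncard_coe_finset, Finset.card_filter]
  rfl

lemma nneg_measurable (d : ℕ) : Measurable (nnegPi d) := by
  unfold nnegPi nneg
  refine Finset.measurable_sum _ fun i _ => Measurable.ite ?_ measurable_const measurable_const
  exact measurableSet_lt (measurable_pi_apply i) measurable_const

lemma parity_meas (d : ℕ) : MeasurableSet {x : Fin d → ℝ | Even (nnegPi d x)} := by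
  have : {x : Fin d → ℝ | Even (nnegPi d x)} = nnegPi d ⁻¹' {n | Even n} := rfl
  rw [this]
  exact (nneg_measurable d) (Set.to_countable _).measurableSet

lemma parity_flip (d : ℕ) (hd : 0 < d) (x : EuclideanSpace ℝ (Fin d))
    (h0 : x ⟨0, hd⟩ ≠ 0) : Even (nneg d (reflE d x)) ↔ ¬ Even (nneg d x) := by
  set j0 : Fin d := ⟨0, hd⟩ with hj0
  have hrefl : ∀ i, reflE d x i = if i = j0 then -(x i) else x i := by
    intro i
    unfold reflE
    simp only [WithLp.ofLp_toLp]
    congr 1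
    simp [Fin.ext_iff, hj0]
  have hsum : ∀ y : EuclideanSpace ℝ (Fin d), nneg d y =
      (if y j0 < 0 then 1 else 0) + ∑ i ∈ Finset.univ.erase j0, (if y i < 0 then 1 else 0) := by
    intro y
    rw [nneg, ← Finset.add_sum_erase _ _ (Finset.mem_univ j0)]
  have hsame : ∑ i ∈ Finset.univ.erase j0, (if reflE d x i < 0 then 1 else 0)
      = ∑ i ∈ Finset.univ.erase j0, (if x i < 0 then 1 else 0) := by
    refine Finset.sum_congr rfl fun i hi => ?_
    rw [hrefl i, if_neg (Finset.mem_erase.mp hi).1]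
  rw [hsum (reflE d x), hsum x, hsame, hrefl j0, if_pos rfl]
  rcases lt_or_gt_of_ne h0 with h | h
  · rw [if_neg (by linarith), if_pos h]
    simp [Nat.even_add_one, parity_simps]
  · rw [if_pos (by linarith), if_neg (by linarith)]
    simp [Nat.even_add_one, parity_simps]

lemma null_zero (d : ℕ) : volume {x : EuclideanSpace ℝ (Fin d) | ∃ i, x i = 0} = 0 := by
  have h1 : (volume : Measure (Fin d → ℝ)) {x : Fin d → ℝ | ∃ i, x i = 0} = 0 := by
    have : {x : Fin d → ℝ | ∃ i, x i = 0} = ⋃ i, {x : Fin d → ℝ | x i = 0} := by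
      ext x; simp
    rw [this]
    refine measure_iUnion_null fun i => ?_
    rw [volume_pi]
    exact Measure.pi_hyperplane _ i 0
  have hz : MeasurableSet {x : Fin d → ℝ | ∃ i, x i = 0} := by
    have : {x : Fin d → ℝ | ∃ i, x i = 0} = ⋃ i, (fun x : Fin d → ℝ => x i) ⁻¹' {0} := by
      ext x; simp
    rw [this]
    exact MeasurableSet.iUnion fun i => (measurable_pi_apply i) (measurableSet_singleton 0)
  calc volume {x : EuclideanSpace ℝ (Fin d) | ∃ i, x i = 0}
      = (volume : Measure (Fin d → ℝ)) {x : Fin d → ℝ | ∃ i, x i = 0} :=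
        (EuclideanSpace.volume_preserving_symm_measurableEquiv_toLp (Fin d)).measure_preimage
          hz.nullMeasurableSet
    _ = 0 := h1

lemma Eset_meas (d : ℕ) : MeasurableSet (Eset d) := by
  have h : MeasurableSet ((toPi d (cube d)) ∩
      ((⋂ i, (fun x : Fin d → ℝ => x i) ⁻¹' ({0}ᶜ)) ∩ {x : Fin d → ℝ | Even (nnegPi d x)})) :=
    (cubePi_measurable d).inter
      ((MeasurableSet.iInter fun i =>
        (measurable_pi_apply i) (measurableSet_singleton 0).compl).inter (parity_meas d))
  have he : Eset d = WithLp.ofLp ⁻¹' ((toPi d (cube d)) ∩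
      ((⋂ i, (fun x : Fin d → ℝ => x i) ⁻¹' ({0}ᶜ)) ∩ {x : Fin d → ℝ | Even (nnegPi d x)})) := by
    ext x
    simp only [Eset, Set.mem_setOf_eq, Set.mem_inter_iff, Set.mem_iInter, Set.mem_preimage,
      Set.mem_compl_iff, Set.mem_singleton_iff]
    rfl
  rw [he]
  exact WithLp.measurable_ofLp 2 (Fin d → ℝ) h

lemma Oset_meas (d : ℕ) : MeasurableSet (Oset d) := by
  have h : MeasurableSet ((toPi d (cube d)) ∩
      ((⋂ i, (fun x : Fin d → ℝ => x i) ⁻¹' ({0}ᶜ)) ∩ {x : Fin d → ℝ | Even (nnegPi d x)}ᶜ)) :=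
    (cubePi_measurable d).inter
      ((MeasurableSet.iInter fun i =>
        (measurable_pi_apply i) (measurableSet_singleton 0).compl).inter (parity_meas d).compl)
  have he : Oset d = WithLp.ofLp ⁻¹' ((toPi d (cube d)) ∩
      ((⋂ i, (fun x : Fin d → ℝ => x i) ⁻¹' ({0}ᶜ)) ∩ {x : Fin d → ℝ | Even (nnegPi d x)}ᶜ)) := by
    ext x
    simp only [Oset, Set.mem_setOf_eq, Set.mem_inter_iff, Set.mem_iInter, Set.mem_preimage,
      Set.mem_compl_iff, Set.mem_singleton_iff]
    rfl
  rw [he]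
  exact WithLp.measurable_ofLp 2 (Fin d → ℝ) h

lemma psiE_reflE (d : ℕ) (x : EuclideanSpace ℝ (Fin d)) :
    psiE d (reflE d x) = psiE d x := by
  ext i
  unfold psiE reflE
  by_cases h : (i : ℕ) = 0 <;> simp [h, abs_neg]

lemma reflE_cube_iff (d : ℕ) (x : EuclideanSpace ℝ (Fin d)) :
    reflE d x ∈ cube d ↔ x ∈ cube d := by
  have key : ∀ i, reflE d x i = x i ∨ reflE d x i = -(x i) := by
    intro i
    unfold reflE
    by_cases h : (i : ℕ) = 0 <;> simp [h]
  constructor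
  · intro h i
    have hi := h i
    rcases key i with hk | hk <;> rw [hk] at hi <;>
      simp only [Set.mem_Icc] at hi ⊢ <;> exact ⟨by linarith [hi.1, hi.2], by linarith [hi.1, hi.2]⟩
  · intro h i
    have hi := h i
    rcases key i with hk | hk <;> rw [hk] <;>
      simp only [Set.mem_Icc] at hi ⊢ <;> exact ⟨by linarith [hi.1, hi.2], by linarith [hi.1, hi.2]⟩

lemma reflE_nz_iff (d : ℕ) (x : EuclideanSpace ℝ (Fin d)) :
    (∀ i, reflE d x i ≠ 0) ↔ (∀ i, x i ≠ 0) := by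
  have key : ∀ i, reflE d x i = x i ∨ reflE d x i = -(x i) := by
    intro i
    unfold reflE
    by_cases h : (i : ℕ) = 0 <;> simp [h]
  constructor
  · intro h i hc
    rcases key i with hk | hk
    · exact h i (hk.trans hc)
    · exact h i (by rw [hk, hc, neg_zero])
  · intro h i hc
    rcases key i with hk | hk
    · exact h i (hk.symm.trans hc)
    · exact h i (neg_eq_zero.mp (hk.symm.trans hc))

/-- The fundamental halving identity. -/
lemma parity_half (d : ℕ) (hd : 0 < d) (S : Set (EuclideanSpace ℝ (Fin d)))
    (hS : MeasurableSet S) :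
    2 * volume (Eset d ∩ psiE d ⁻¹' S) = volume (cube d ∩ S) ∧
    2 * volume (Oset d ∩ psiE d ⁻¹' S) = volume (cube d ∩ S) := by
  have hpsiEm : Measurable (psiE d) := psiE_measurable d
  have hXm : MeasurableSet (Eset d ∩ psiE d ⁻¹' S) := (Eset_meas d).inter (hpsiEm hS)
  have hYm : MeasurableSet (Oset d ∩ psiE d ⁻¹' S) := (Oset_meas d).inter (hpsiEm hS)
  have hswap : reflE d ⁻¹' (Oset d ∩ psiE d ⁻¹' S) = Eset d ∩ psiE d ⁻¹' S := by
    ext x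
    simp only [Set.mem_preimage, Set.mem_inter_iff, Oset, Eset, Set.mem_setOf_eq, psiE_reflE]
    constructor
    · rintro ⟨⟨hc, hnz, hp⟩, hs⟩
      have hnz' : ∀ i, x i ≠ 0 := (reflE_nz_iff d x).mp hnz
      have := parity_flip d hd x (hnz' _)
      exact ⟨⟨(reflE_cube_iff d x).mp hc, hnz', by tauto⟩, hs⟩
    · rintro ⟨⟨hc, hnz, hp⟩, hs⟩
      have := parity_flip d hd x (hnz _)
      exact ⟨⟨(reflE_cube_iff d x).mpr hc, (reflE_nz_iff d x).mpr hnz, by tauto⟩, hs⟩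
  have hEO : volume (Eset d ∩ psiE d ⁻¹' S) = volume (Oset d ∩ psiE d ⁻¹' S) := by
    rw [← hswap]
    exact (reflE_mp d).measure_preimage hYm.nullMeasurableSet
  have hsum : volume (Eset d ∩ psiE d ⁻¹' S) + volume (Oset d ∩ psiE d ⁻¹' S)
      = volume (cube d ∩ S) := by
    have hdisj : Disjoint (Eset d ∩ psiE d ⁻¹' S) (Oset d ∩ psiE d ⁻¹' S) := by
      rw [Set.disjoint_left]
      rintro x ⟨⟨_, _, hp⟩, _⟩ ⟨⟨_, _, hp'⟩, _⟩
      exact hp' hp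
    rw [← measure_union hdisj hYm]
    have hsub1 : (Eset d ∩ psiE d ⁻¹' S) ∪ (Oset d ∩ psiE d ⁻¹' S) ⊆ cube d ∩ psiE d ⁻¹' S := by
      rintro x (⟨⟨hc, _, _⟩, hs⟩ | ⟨⟨hc, _, _⟩, hs⟩) <;> exact ⟨hc, hs⟩
    have hsub2 : cube d ∩ psiE d ⁻¹' S ⊆
        ((Eset d ∩ psiE d ⁻¹' S) ∪ (Oset d ∩ psiE d ⁻¹' S)) ∪
          {x : EuclideanSpace ℝ (Fin d) | ∃ i, x i = 0} := by
      rintro x ⟨hc, hs⟩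
      by_cases hz : ∃ i, x i = 0
      · exact Or.inr hz
      · push_neg at hz
        by_cases hp : Even (nneg d x)
        · exact Or.inl (Or.inl ⟨⟨hc, hz, hp⟩, hs⟩)
        · exact Or.inl (Or.inr ⟨⟨hc, hz, hp⟩, hs⟩)
    have heq : volume ((Eset d ∩ psiE d ⁻¹' S) ∪ (Oset d ∩ psiE d ⁻¹' S))
        = volume (cube d ∩ psiE d ⁻¹' S) := by
      refine le_antisymm (measure_mono hsub1) ?_
      calc volume (cube d ∩ psiE d ⁻¹' S)
          ≤ volume (((Eset d ∩ psiE d ⁻¹' S) ∪ (Oset d ∩ psiE d ⁻¹' S)) ∪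
              {x : EuclideanSpace ℝ (Fin d) | ∃ i, x i = 0}) := measure_mono hsub2
        _ ≤ volume ((Eset d ∩ psiE d ⁻¹' S) ∪ (Oset d ∩ psiE d ⁻¹' S)) +
            volume {x : EuclideanSpace ℝ (Fin d) | ∃ i, x i = 0} := measure_union_le _ _
        _ = volume ((Eset d ∩ psiE d ⁻¹' S) ∪ (Oset d ∩ psiE d ⁻¹' S)) := by
            rw [null_zero, add_zero]
    rw [heq, volA d S hS]
  constructor
  · rw [two_mul]
    nth_rewrite 2 [hEO]
    exact hsum
  · rw [two_mul]
    nth_rewrite 1 [← hEO]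
    exact hsum

lemma design_finite (d : ℕ) (δ : ℝ) : (design d δ).Finite := by
  have hsub : design d δ ⊆
      (fun ε : Fin d → ℝ => (WithLp.toLp 2 (fun i => δ * ε i) : EuclideanSpace ℝ (Fin d))) ''
        (Set.pi Set.univ fun _ : Fin d => ({1, -1} : Set ℝ)) := by
    rintro z ⟨ε, hε, _, hz⟩
    exact ⟨ε, fun i _ => by rcases hε i with h | h <;> simp [h], (congrArg (WithLp.toLp 2) hz).symm⟩
  exact ((Set.Finite.pi fun _ => (Set.finite_singleton _).insert _).image _).subset hsub

lemma cube_vol_lt_top (d : ℕ) : volume (cube d) < ⊤ := by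
  rw [vol_toPi d _ (cube_measurable d), cube_eq_pi]
  have : (volume : Measure (Fin d → ℝ)) (Set.pi Set.univ fun _ => Icc (-1:ℝ) 1)
      = (ENNReal.ofReal 2) ^ d := by
    rw [volume_pi_pi]
    simp [Real.volume_Icc]
    norm_num
  rw [this]
  exact ENNReal.pow_lt_top ENNReal.ofReal_lt_top

lemma sum_ball (d : ℕ) (x z : EuclideanSpace ℝ (Fin d)) (ρ : ℝ) (hρ : 0 ≤ ρ) :
    x ∈ Metric.closedBall z ρ ↔ ∑ i, (x i - z i) ^ 2 ≤ ρ ^ 2 := by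
  rw [Metric.mem_closedBall, EuclideanSpace.dist_eq]
  simp only [Real.dist_eq, sq_abs]
  have hnn : 0 ≤ ∑ i, (x i - z i) ^ 2 := Finset.sum_nonneg fun i _ => sq_nonneg _
  constructor
  · intro h
    have h2 : (Real.sqrt (∑ i, (x i - z i) ^ 2)) ^ 2 ≤ ρ ^ 2 :=
      pow_le_pow_left₀ (Real.sqrt_nonneg _) h 2
    rwa [Real.sq_sqrt hnn] at h2
  · intro h
    calc Real.sqrt (∑ i, (x i - z i) ^ 2) ≤ Real.sqrt (ρ ^ 2) := Real.sqrt_le_sqrt h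
      _ = ρ := Real.sqrt_sq hρ

lemma coord_sq_le (t d e : ℝ) (hd : 0 ≤ d) (he : e = 1 ∨ e = -1) :
    (|t| - d) ^ 2 ≤ (t - d * e) ^ 2 := by
  rcases he with rfl | rfl <;> rcases abs_cases t with ⟨h1, h2⟩ | ⟨h1, h2⟩ <;> nlinarith

lemma mem_design (d : ℕ) (δ : ℝ) (y : EuclideanSpace ℝ (Fin d)) (hpar : Even (nneg d y)) :
    (WithLp.toLp 2 (fun i => δ * (if y i < 0 then (-1 : ℝ) else 1)) : EuclideanSpace ℝ (Fin d)) ∈ design d δ := by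
  refine ⟨fun i => if y i < 0 then -1 else 1, fun i => ?_, ?_, rfl⟩
  · by_cases h : y i < 0
    · exact Or.inr (if_pos h)
    · exact Or.inl (if_neg h)
  · have hset : {i | (if y i < 0 then (-1 : ℝ) else 1) = -1} = {i | y i < 0} := by
      ext i
      by_cases h : y i < 0
      · simp [h]
      · simp only [Set.mem_setOf_eq, if_neg h, h, iff_false]
        norm_num
    rw [hset, ncard_eq_nneg]
    exact hpar

lemma upper_pt (d : ℕ) (δ r : ℝ) (hδ : 0 ≤ δ) (hr : 0 ≤ r) (x : EuclideanSpace ℝ (Fin d))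
    (hx : ∃ z ∈ design d δ, x ∈ Metric.closedBall z r) :
    psiE d x ∈ Metric.closedBall (const d (2 * δ - 1)) (2 * r) := by
  obtain ⟨z, ⟨ε, hε, hpar, hz⟩, hdist⟩ := hx
  rw [sum_ball _ _ _ _ (by linarith)]
  rw [sum_ball _ _ _ r hr] at hdist
  rw [hz] at hdist
  calc ∑ i, (psiE d x i - const d (2 * δ - 1) i) ^ 2
      = ∑ i, 4 * (|x i| - δ) ^ 2 := by
        refine Finset.sum_congr rfl fun i _ => ?_
        show ((2 * |x i| - 1) - (2 * δ - 1)) ^ 2 = _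
        ring
    _ ≤ ∑ i, 4 * (x i - δ * ε i) ^ 2 := by
        refine Finset.sum_le_sum fun i _ => ?_
        have := coord_sq_le (x i) δ (ε i) hδ (hε i)
        linarith
    _ = 4 * ∑ i, (x i - δ * ε i) ^ 2 := (Finset.mul_sum _ _ _).symm
    _ ≤ 4 * r ^ 2 := by
        refine mul_le_mul_of_nonneg_left ?_ (by norm_num)
        exact hdist
    _ = (2 * r) ^ 2 := by ring

lemma lower_even (d : ℕ) (δ r : ℝ) (hδ : 0 < δ) (hr : 0 ≤ r) (x : EuclideanSpace ℝ (Fin d))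
    (hpar : Even (nneg d x))
    (hball : psiE d x ∈ Metric.closedBall (const d (2 * δ - 1)) (2 * r)) :
    ∃ z ∈ design d δ, x ∈ Metric.closedBall z r := by
  refine ⟨_, mem_design d δ x hpar, ?_⟩
  rw [sum_ball _ _ _ r hr]
  rw [sum_ball _ _ _ _ (by linarith)] at hball
  calc ∑ i, (x i - (fun i => δ * (if x i < 0 then (-1 : ℝ) else 1)) i) ^ 2
      = ∑ i, (1 / 4) * (psiE d x i - const d (2 * δ - 1) i) ^ 2 := by
        refine Finset.sum_congr rfl fun i _ => ?_
        show (x i - δ * (if x i < 0 then (-1 : ℝ) else 1)) ^ 2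
          = (1 / 4) * ((2 * |x i| - 1) - (2 * δ - 1)) ^ 2
        by_cases h : x i < 0
        · rw [if_pos h, abs_of_neg h]; ring
        · rw [if_neg h, abs_of_nonneg (not_lt.mp h)]; ring
    _ = (1 / 4) * ∑ i, (psiE d x i - const d (2 * δ - 1) i) ^ 2 := (Finset.mul_sum _ _ _).symm
    _ ≤ (1 / 4) * (2 * r) ^ 2 := mul_le_mul_of_nonneg_left hball (by norm_num)
    _ = r ^ 2 := by ring

lemma lower_odd (d : ℕ) (hd : 0 < d) (δ r : ℝ) (hδ : 0 < δ) (hr : 0 ≤ r)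
    (x : EuclideanSpace ℝ (Fin d)) (hnz : ∀ i, x i ≠ 0) (hpar : ¬ Even (nneg d x))
    (A : EuclideanSpace ℝ (Fin d))
    (hA : ∀ i : Fin d, A i = if (i : ℕ) = 0 then 2 * δ + 1 else 2 * δ - 1)
    (hball : reflE d (psiE d x) ∈ Metric.closedBall A (2 * r)) :
    ∃ z ∈ design d δ, x ∈ Metric.closedBall z r := by
  have hpary : Even (nneg d (reflE d x)) := (parity_flip d hd x (hnz _)).mpr hpar
  refine ⟨_, mem_design d δ (reflE d x) hpary, ?_⟩
  rw [sum_ball _ _ _ r hr]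
  rw [sum_ball _ _ _ _ (by linarith)] at hball
  calc ∑ i, (x i - (fun i => δ * (if reflE d x i < 0 then (-1 : ℝ) else 1)) i) ^ 2
      = ∑ i, (1 / 4) * (reflE d (psiE d x) i - A i) ^ 2 := by
        refine Finset.sum_congr rfl fun i _ => ?_
        show (x i - δ * (if reflE d x i < 0 then (-1 : ℝ) else 1)) ^ 2
          = (1 / 4) * (reflE d (psiE d x) i - A i) ^ 2
        by_cases hi : (i : ℕ) = 0
        · have hrx : reflE d x i = -(x i) := by unfold reflE; simp only [WithLp.ofLp_toLp]; rw [if_pos hi]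
          have hrp : reflE d (psiE d x) i = -(2 * |x i| - 1) := by
            unfold reflE psiE; simp only [WithLp.ofLp_toLp]; rw [if_pos hi]
          rw [hrx, hrp, hA i, if_pos hi]
          rcases lt_or_gt_of_ne (hnz i) with h | h
          · rw [if_neg (by linarith : ¬ -(x i) < 0), abs_of_neg h]; ring
          · rw [if_pos (by linarith : -(x i) < 0), abs_of_pos h]; ring
        · have hrx : reflE d x i = x i := by unfold reflE; simp only [WithLp.ofLp_toLp]; rw [if_neg hi]
          have hrp : reflE d (psiE d x) i = 2 * |x i| - 1 := by
            unfold reflE psiE; simp only [WithLp.ofLp_toLp]; rw [if_neg hi]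
          rw [hrx, hrp, hA i, if_neg hi]
          by_cases h : x i < 0
          · rw [if_pos h, abs_of_neg h]; ring
          · rw [if_neg h, abs_of_nonneg (not_lt.mp h)]; ring
    _ = (1 / 4) * ∑ i, (reflE d (psiE d x) i - A i) ^ 2 := (Finset.mul_sum _ _ _).symm
    _ ≤ (1 / 4) * (2 * r) ^ 2 := mul_le_mul_of_nonneg_left hball (by norm_num)
    _ = r ^ 2 := by ring

theorem stmt12 (d : ℕ) (hd : 2 ≤ d) (δ r : ℝ) (hδ0 : 0 < δ) (hδ1 : δ < 1) (hr : 0 ≤ r) :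
    (1 / 2) *
        (coverOne d (const d (2 * δ - 1)) (2 * r) +
          coverOne d
            (WithLp.toLp 2 (fun i : Fin d => if (i : ℕ) = 0 then 2 * δ + 1 else 2 * δ - 1) :
              EuclideanSpace ℝ (Fin d)) (2 * r)) ≤
        cover d (design d δ) r ∧
      cover d (design d δ) r ≤ coverOne d (const d (2 * δ - 1)) (2 * r) := by
  have hd0 : 0 < d := by omega
  set A : EuclideanSpace ℝ (Fin d) :=
    WithLp.toLp 2 (fun i : Fin d => if (i : ℕ) = 0 then 2 * δ + 1 else 2 * δ - 1) with hA
  have hB1m : MeasurableSet (Metric.closedBall (const d (2 * δ - 1)) (2 * r)) :=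
    Metric.isClosed_closedBall.measurableSet
  have hBAm : MeasurableSet (Metric.closedBall A (2 * r)) := Metric.isClosed_closedBall.measurableSet
  have hpsiEm : Measurable (psiE d) := psiE_measurable d
  have hreflEm : Measurable (reflE d) :=
    (WithLp.measurable_toLp 2 (Fin d → ℝ)).comp ((reflPi_measurable d).comp (WithLp.measurable_ofLp 2 (Fin d → ℝ)))
  have hS2m : MeasurableSet (reflE d ⁻¹' Metric.closedBall A (2 * r)) := hreflEm hBAm
  -- abbreviations
  set B1 := Metric.closedBall (const d (2 * δ - 1)) (2 * r) with hB1
  set BA := Metric.closedBall A (2 * r) with hBA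
  set S₂ := reflE d ⁻¹' BA with hS₂
  set W := cube d ∩ ⋃ z ∈ design d δ, Metric.closedBall z r with hW
  set X := Eset d ∩ psiE d ⁻¹' B1 with hX
  set Y := Oset d ∩ psiE d ⁻¹' S₂ with hY
  have hYm : MeasurableSet Y := (Oset_meas d).inter (hpsiEm hS2m)
  have hX2 := (parity_half d hd0 B1 hB1m).1
  have hY2 := (parity_half d hd0 S₂ hS2m).2
  have hcS2 : volume (cube d ∩ S₂) = volume (cube d ∩ BA) := by
    have hset : cube d ∩ S₂ = reflE d ⁻¹' (cube d ∩ BA) := by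
      ext x
      simp only [Set.mem_inter_iff, Set.mem_preimage, hS₂]
      constructor
      · rintro ⟨h1, h2⟩; exact ⟨(reflE_cube_iff d x).mpr h1, h2⟩
      · rintro ⟨h1, h2⟩; exact ⟨(reflE_cube_iff d x).mp h1, h2⟩
    rw [hset]
    exact (reflE_mp d).measure_preimage ((cube_measurable d).inter hBAm).nullMeasurableSet
  -- upper bound
  have hup : volume W ≤ volume (cube d ∩ B1) := by
    rw [← volA d B1 hB1m]
    refine measure_mono fun x hx => ?_
    obtain ⟨hxc, hxu⟩ := hx
    refine ⟨hxc, ?_⟩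
    simp only [Set.mem_iUnion] at hxu
    obtain ⟨z, hz, hxb⟩ := hxu
    exact upper_pt d δ r hδ0.le hr x ⟨z, hz, hxb⟩
  -- lower bound
  have hXW : X ⊆ W := by
    rintro x ⟨⟨hxc, hnz, hpar⟩, hball⟩
    obtain ⟨z, hz, hb⟩ := lower_even d δ r hδ0 hr x hpar hball
    exact ⟨hxc, Set.mem_biUnion hz hb⟩
  have hYW : Y ⊆ W := by
    rintro x ⟨⟨hxc, hnz, hpar⟩, hball⟩
    obtain ⟨z, hz, hb⟩ := lower_odd d hd0 δ r hδ0 hr x hnz hpar A (fun i => rfl) (by exact hball)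
    exact ⟨hxc, Set.mem_biUnion hz hb⟩
  have hdisjXY : Disjoint X Y := by
    rw [Set.disjoint_left]
    rintro x ⟨⟨_, _, hp⟩, _⟩ ⟨⟨_, _, hp'⟩, _⟩
    exact hp' hp
  have hlow : volume X + volume Y ≤ volume W := by
    rw [← measure_union hdisjXY hYm]
    exact measure_mono (Set.union_subset hXW hYW)
  -- finiteness
  have hcf := cube_vol_lt_top d
  have hane : volume (cube d ∩ B1) ≠ ⊤ :=
    ((measure_mono Set.inter_subset_left).trans_lt hcf).ne
  have hbne : volume (cube d ∩ BA) ≠ ⊤ :=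
    ((measure_mono Set.inter_subset_left).trans_lt hcf).ne
  have hwne : volume W ≠ ⊤ := by
    rw [hW]
    exact ((measure_mono Set.inter_subset_left).trans_lt hcf).ne
  have hXne : volume X ≠ ⊤ := by
    rw [hX]
    exact ((measure_mono fun x hx => hx.1.1).trans_lt hcf).ne
  have hYne : volume Y ≠ ⊤ := by
    rw [hY]
    exact ((measure_mono fun x hx => hx.1.1).trans_lt hcf).ne
  -- convert to reals
  have hx' : 2 * (volume X).toReal = (volume (cube d ∩ B1)).toReal := by
    rw [← hX2, ENNReal.toReal_mul]
    norm_num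
    rfl
  have hy' : 2 * (volume Y).toReal = (volume (cube d ∩ BA)).toReal := by
    rw [← hcS2, ← hY2, ENNReal.toReal_mul]
    norm_num
    rfl
  have hlow' : (volume X).toReal + (volume Y).toReal ≤ (volume W).toReal := by
    rw [← ENNReal.toReal_add hXne hYne]
    exact (ENNReal.toReal_le_toReal (by finiteness) hwne).mpr hlow
  have hup' : (volume W).toReal ≤ (volume (cube d ∩ B1)).toReal :=
    (ENNReal.toReal_le_toReal hwne hane).mpr hup
  have h2d : (0 : ℝ) < 2 ^ d := by positivity
  constructor
  · show (1 / 2) * ((volume (cube d ∩ B1)).toReal / 2 ^ d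
        + (volume (cube d ∩ BA)).toReal / 2 ^ d) ≤ (volume W).toReal / 2 ^ d
    have key : (1 / 2 : ℝ) * ((volume (cube d ∩ B1)).toReal + (volume (cube d ∩ BA)).toReal)
        ≤ (volume W).toReal := by linarith
    calc (1 / 2 : ℝ) * ((volume (cube d ∩ B1)).toReal / 2 ^ d
          + (volume (cube d ∩ BA)).toReal / 2 ^ d)
        = ((1 / 2) * ((volume (cube d ∩ B1)).toReal + (volume (cube d ∩ BA)).toReal)) / 2 ^ d := by
          ring
      _ ≤ (volume W).toReal / 2 ^ d := div_le_div_of_nonneg_right key h2d.le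
  · show (volume W).toReal / 2 ^ d ≤ (volume (cube d ∩ B1)).toReal / 2 ^ d
    exact div_le_div_of_nonneg_right hup' h2d.le

end
end

section
/- Fix γ with 0 < γ < 1 and fix 0 < δ ≤ 1. For each integer d ≥ 2 let r_{1−γ}(d) = inf{ r ≥ 0 : C_d(D(d,δ), r) ≥ 1 − γ } and let R_{1−γ}(d) = 2^{(d−1)/d}·r_{1−γ}(d)/(2√d) be the normalised covering radius. Then lim_{d→∞} R_{1−γ}(d) exists and equals √(1/3 + (2δ−1)²)/2; in particular, over δ ∈ (0,1] this limit is minimal exactly at δ = 1/2, where it equals 1/(2√3). -/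
open MeasureTheory Filter

noncomputable section

/-- The `(1-γ)`-covering radius of the design `D(d,δ)`. -/
def rcov (d : ℕ) (δ γ : ℝ) : ℝ :=
  sInf {r : ℝ | 0 ≤ r ∧ 1 - γ ≤ cover d (design d δ) r}

namespace S16

open Topology

def P1 : Measure ℝ := (2 : ENNReal)⁻¹ • ((volume : Measure ℝ).restrict (Set.Icc (-1) 1))

instance : IsProbabilityMeasure P1 := by
  constructor
  simp [P1, Measure.restrict_apply, Real.volume_Icc]
  rw [show ((1:ℝ) + 1) = 2 by norm_num, ENNReal.ofReal_ofNat]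
  exact ENNReal.inv_mul_cancel (by norm_num) (by norm_num)

def I : Type := ℝ

instance : MeasurableSpace I := inferInstanceAs (MeasurableSpace ℝ)
instance : MeasureSpace I := { volume := P1 }

instance : IsProbabilityMeasure (volume : Measure I) :=
  inferInstanceAs (IsProbabilityMeasure P1)

def ieq : I ≃ᵐ ℝ :=
  { toFun := fun x => x, invFun := fun x => x, left_inv := fun _ => rfl,
    right_inv := fun _ => rfl,
    measurable_toFun := measurable_id, measurable_invFun := measurable_id }

lemma ieq_mp : MeasurePreserving ieq (volume : Measure I) P1 := by
  refine ⟨ieq.measurable, ?_⟩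
  ext s hs
  rw [Measure.map_apply ieq.measurable hs]
  rfl

def meq (d : ℕ) : (Fin d → I) ≃ᵐ (Fin d → ℝ) := MeasurableEquiv.piCongrRight (fun _ => ieq)

def Pd (d : ℕ) : Measure (Fin d → ℝ) := Measure.pi fun _ => P1

instance (d : ℕ) : IsProbabilityMeasure (Pd d) := by unfold Pd; infer_instance

lemma meq_mp (d : ℕ) : MeasurePreserving (meq d) (volume : Measure (Fin d → I)) (Pd d) := by
  refine ⟨(meq d).measurable, ?_⟩
  refine (Measure.pi_eq fun s hs => ?_).symm
  rw [Measure.map_apply (meq d).measurable (MeasurableSet.univ_pi hs)]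
  have : (meq d) ⁻¹' Set.pi Set.univ s = Set.pi Set.univ (fun i => ieq ⁻¹' (s i)) := by
    ext x; simp [meq, MeasurableEquiv.piCongrRight, Set.mem_pi]
  rw [this, volume_pi_pi]
  rfl


lemma int_prod (d : ℕ) (f : Fin d → ℝ → ℝ) :
    ∫ y, ∏ k, f k (y k) ∂(Pd d) = ∏ k, ∫ t, f k t ∂P1 := by
  rw [← (meq_mp d).integral_comp']
  have : ∀ x : Fin d → I, (∏ k, f k ((meq d x) k)) = ∏ k, (fun (t : I) => f k (ieq t)) (x k) := by
    intro x; rfl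
  rw [show (fun x : Fin d → I => ∏ k, f k ((meq d) x k)) = fun x => ∏ k, (fun (t : I) => f k (ieq t)) (x k) from funext this]
  refine (MeasureTheory.integral_fintype_prod_eq_prod (μ := fun _ => (volume : Measure I)) (fun k (t : I) => f k (ieq t))).trans ?_
  exact Finset.prod_congr rfl fun k _ => (ieq_mp.integral_comp' _).symm

def hh (δ t : ℝ) : ℝ := (|t| - δ)^2
def mm (δ : ℝ) : ℝ := 1/3 - δ + δ^2

lemma cont_hh (δ : ℝ) : Continuous (hh δ) := by
  unfold hh; fun_prop

lemma integrable_P1 {f : ℝ → ℝ} (hf : Continuous f) : Integrable f P1 := by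
  unfold P1
  refine Integrable.smul_measure ?_ (by norm_num)
  exact (hf.continuousOn).integrableOn_compact isCompact_Icc

lemma abs_int : ∫ t in (-1:ℝ)..1, |t| = 1 := by
  rw [← intervalIntegral.integral_add_adjacent_intervals (b := 0)
    (continuous_abs.intervalIntegrable _ _) (continuous_abs.intervalIntegrable _ _)]
  have h1 : ∫ t in (-1:ℝ)..0, |t| = ∫ t in (-1:ℝ)..0, -t := by
    apply intervalIntegral.integral_congr
    intro t ht
    rw [Set.uIcc_of_le (by norm_num)] at ht
    exact abs_of_nonpos ht.2
  have h2 : ∫ t in (0:ℝ)..1, |t| = ∫ t in (0:ℝ)..1, t := by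
    apply intervalIntegral.integral_congr
    intro t ht
    rw [Set.uIcc_of_le (by norm_num)] at ht
    exact abs_of_nonneg ht.1
  rw [h1, h2, intervalIntegral.integral_neg, integral_id, integral_id]
  norm_num

lemma integral_hh (δ : ℝ) : ∫ t, hh δ t ∂P1 = mm δ := by
  unfold P1
  rw [integral_smul_measure]
  have hset : ∫ t in Set.Icc (-1:ℝ) 1, hh δ t = ∫ t in (-1:ℝ)..1, hh δ t := by
    rw [MeasureTheory.integral_Icc_eq_integral_Ioc,
      intervalIntegral.integral_of_le (by norm_num : (-1:ℝ) ≤ 1)]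
  rw [hset]
  have : ∀ t : ℝ, hh δ t = t^2 - (2*δ) * |t| + δ^2 := by
    intro t; unfold hh; rw [sub_sq]; rw [sq_abs]; ring
  simp_rw [this]
  rw [intervalIntegral.integral_add (f := fun t : ℝ => t ^ 2 - 2 * δ * |t|) (g := fun _ => δ ^ 2) (((continuous_pow 2).intervalIntegrable _ _).sub
      ((continuous_const.mul continuous_abs : Continuous fun t : ℝ => 2 * δ * |t|).intervalIntegrable _ _))
      (intervalIntegrable_const),
    intervalIntegral.integral_sub (f := fun t : ℝ => t ^ 2) (g := fun t : ℝ => 2 * δ * |t|) ((continuous_pow 2).intervalIntegrable _ _)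
      ((continuous_const.mul continuous_abs : Continuous fun t : ℝ => 2 * δ * |t|).intervalIntegrable _ _),
    intervalIntegral.integral_const_mul, abs_int, integral_pow,
    intervalIntegral.integral_const]
  unfold mm
  simp [ENNReal.toReal_inv]
  ring

def Q (d : ℕ) : Set (Fin d → ℝ) := Set.pi Set.univ fun _ => Set.Icc (-1) 1

lemma Q_meas (d : ℕ) : MeasurableSet (Q d) :=
  MeasurableSet.univ_pi fun _ => measurableSet_Icc

lemma P1_Icc : P1 (Set.Icc (-1:ℝ) 1) = 1 := by
  unfold P1
  rw [Measure.smul_apply, Measure.restrict_apply measurableSet_Icc, Set.inter_self,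
    Real.volume_Icc, show ((1:ℝ) - -1) = 2 by norm_num, ENNReal.ofReal_ofNat, smul_eq_mul]
  exact ENNReal.inv_mul_cancel (by norm_num) (by norm_num)

lemma Pd_Q (d : ℕ) : Pd d (Q d) = 1 := by
  unfold Pd Q
  rw [Measure.pi_pi]
  simp [P1_Icc]

lemma ae_Q (d : ℕ) : ∀ᵐ y ∂(Pd d), ∀ k, y k ∈ Set.Icc (-1:ℝ) 1 := by
  have h0 : Pd d (Q d)ᶜ = 0 := by
    rw [measure_compl (Q_meas d) (measure_ne_top _ _), Pd_Q, measure_univ, tsub_self]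
  rw [ae_iff]
  refine measure_mono_null (fun y hy => ?_) h0
  intro hQ
  exact hy fun k => hQ k (Set.mem_univ k)

lemma mm_mem (δ : ℝ) (hδ0 : 0 < δ) (hδ1 : δ ≤ 1) : 0 < mm δ ∧ mm δ ≤ 1/3 := by
  constructor
  · unfold mm; nlinarith [sq_nonneg (δ - 1/2)]
  · unfold mm; nlinarith

lemma hh_mem {δ t : ℝ} (hδ0 : 0 < δ) (hδ1 : δ ≤ 1) (ht : t ∈ Set.Icc (-1:ℝ) 1) :
    0 ≤ hh δ t ∧ hh δ t ≤ 1 := by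
  have h1 : |t| ≤ 1 := abs_le.mpr ⟨ht.1, ht.2⟩
  have h0 : 0 ≤ |t| := abs_nonneg t
  constructor
  · exact sq_nonneg _
  · unfold hh; nlinarith

lemma phi_abs_le {δ t : ℝ} (hδ0 : 0 < δ) (hδ1 : δ ≤ 1) (ht : t ∈ Set.Icc (-1:ℝ) 1) :
    |hh δ t - mm δ| ≤ 1 := by
  obtain ⟨h1, h2⟩ := hh_mem hδ0 hδ1 ht
  obtain ⟨h3, h4⟩ := mm_mem δ hδ0 hδ1
  rw [abs_le]; constructor <;> linarith

lemma integral_phi (δ : ℝ) : ∫ t, (hh δ t - mm δ) ∂P1 = 0 := by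
  rw [integral_sub (integrable_P1 (cont_hh δ)) (integrable_const _), integral_hh,
    integral_const]
  simp

lemma ae_Icc : ∀ᵐ t ∂P1, t ∈ Set.Icc (-1:ℝ) 1 := by
  unfold P1
  exact Measure.ae_smul_measure (ae_restrict_mem measurableSet_Icc) _

lemma integral_phi_sq (δ : ℝ) (hδ0 : 0 < δ) (hδ1 : δ ≤ 1) :
    ∫ t, (hh δ t - mm δ)^2 ∂P1 ≤ 1 := by
  have h1 : ∫ t, (1:ℝ) ∂P1 = 1 := by simp
  rw [← h1]
  refine integral_mono_ae (integrable_P1 (((cont_hh δ).sub continuous_const).pow 2))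
    (integrable_const _) ?_
  filter_upwards [ae_Icc] with t ht
  have := phi_abs_le hδ0 hδ1 ht
  nlinarith [abs_nonneg (hh δ t - mm δ), sq_abs (hh δ t - mm δ)]

def gg (d : ℕ) (δ : ℝ) (y : Fin d → ℝ) : ℝ := ∑ i, hh δ (y i)

lemma gg_meas (d : ℕ) (δ : ℝ) : Measurable (gg d δ) := by
  apply Finset.measurable_sum
  intro i _
  exact (cont_hh δ).measurable.comp (measurable_pi_apply i)

lemma int_cross (d : ℕ) (δ : ℝ) (i j : Fin d) (hij : i ≠ j) :
    ∫ y, (hh δ (y i) - mm δ) * (hh δ (y j) - mm δ) ∂(Pd d) = 0 := by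
  set φ : ℝ → ℝ := fun t => hh δ t - mm δ with hφ
  set f : Fin d → ℝ → ℝ := fun k => if k = i then φ else if k = j then φ else fun _ => 1 with hf
  have key : ∀ y : Fin d → ℝ, φ (y i) * φ (y j) = ∏ k, f k (y k) := by
    intro y
    have h1 : ∏ k ∈ (Finset.univ.erase i).erase j, f k (y k) = 1 := by
      refine Finset.prod_eq_one fun k hk => ?_
      have hkj := (Finset.mem_erase.mp hk).1
      have hki := (Finset.mem_erase.mp (Finset.mem_erase.mp hk).2).1
      simp [hf, hki, hkj]
    rw [← Finset.mul_prod_erase Finset.univ (fun k => f k (y k)) (Finset.mem_univ i),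
      ← Finset.mul_prod_erase _ (fun k => f k (y k))
        (Finset.mem_erase.mpr ⟨hij.symm, Finset.mem_univ j⟩), h1, mul_one]
    simp [hf, hij.symm]
  show ∫ y, φ (y i) * φ (y j) ∂(Pd d) = 0
  simp_rw [key]
  rw [int_prod]
  apply Finset.prod_eq_zero (Finset.mem_univ i)
  simp only [hf, if_pos rfl]
  exact integral_phi δ

lemma int_diag (d : ℕ) (δ : ℝ) (hδ0 : 0 < δ) (hδ1 : δ ≤ 1) (i : Fin d) :
    ∫ y, (hh δ (y i) - mm δ) * (hh δ (y i) - mm δ) ∂(Pd d) ≤ 1 := by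
  set φ : ℝ → ℝ := fun t => hh δ t - mm δ with hφ
  set f : Fin d → ℝ → ℝ := fun k => if k = i then (fun t => φ t * φ t) else fun _ => 1 with hf
  have key : ∀ y : Fin d → ℝ, φ (y i) * φ (y i) = ∏ k, f k (y k) := by
    intro y
    have h1 : ∏ k ∈ Finset.univ.erase i, f k (y k) = 1 := by
      refine Finset.prod_eq_one fun k hk => ?_
      simp [hf, (Finset.mem_erase.mp hk).1]
    rw [← Finset.mul_prod_erase Finset.univ (fun k => f k (y k)) (Finset.mem_univ i), h1,
      mul_one]
    simp [hf]
  show ∫ y, φ (y i) * φ (y i) ∂(Pd d) ≤ 1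
  simp_rw [key]
  rw [int_prod]
  rw [Finset.prod_eq_single_of_mem i (Finset.mem_univ i)]
  · simp only [hf, if_pos rfl]
    simp_rw [← sq]
    exact integral_phi_sq δ hδ0 hδ1
  · intro k _ hk
    simp [hf, hk, measure_univ]


lemma sum_phi (d : ℕ) (δ : ℝ) (y : Fin d → ℝ) :
    gg d δ y - d * mm δ = ∑ i, (hh δ (y i) - mm δ) := by
  unfold gg
  rw [Finset.sum_sub_distrib, Finset.sum_const, Finset.card_univ, Fintype.card_fin,
    nsmul_eq_mul]

lemma integrable_prod_coord (d : ℕ) (hδ0 : 0 < δ) (hδ1 : δ ≤ 1) (i j : Fin d) :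
    Integrable (fun y => (hh δ (y i) - mm δ) * (hh δ (y j) - mm δ)) (Pd d) := by
  have hm : Measurable fun y : Fin d → ℝ => (hh δ (y i) - mm δ) * (hh δ (y j) - mm δ) := by
    exact ((((cont_hh δ).measurable.comp (measurable_pi_apply i)).sub measurable_const).mul
      (((cont_hh δ).measurable.comp (measurable_pi_apply j)).sub measurable_const))
  refine Integrable.mono' (integrable_const 1) hm.aestronglyMeasurable ?_
  filter_upwards [ae_Q d] with y hy
  rw [Real.norm_eq_abs, abs_mul]
  exact mul_le_one₀ (phi_abs_le hδ0 hδ1 (hy i)) (abs_nonneg _) (phi_abs_le hδ0 hδ1 (hy j))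

lemma var_bound (d : ℕ) (hδ0 : 0 < δ) (hδ1 : δ ≤ 1) :
    ∫ y, (gg d δ y - d * mm δ)^2 ∂(Pd d) ≤ d := by
  have hrw : ∀ y : Fin d → ℝ, (gg d δ y - d * mm δ)^2
      = ∑ i, ∑ j, (hh δ (y i) - mm δ) * (hh δ (y j) - mm δ) := by
    intro y
    rw [sum_phi, sq, Finset.sum_mul_sum]
  simp_rw [hrw]
  rw [integral_finset_sum _ (fun i _ =>
    integrable_finset_sum _ (fun j _ => integrable_prod_coord d hδ0 hδ1 i j))]
  have : ∀ i : Fin d, (∫ y, ∑ j, (hh δ (y i) - mm δ) * (hh δ (y j) - mm δ) ∂(Pd d))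
      = ∑ j, ∫ y, (hh δ (y i) - mm δ) * (hh δ (y j) - mm δ) ∂(Pd d) := fun i =>
    integral_finset_sum _ (fun j _ => integrable_prod_coord d hδ0 hδ1 i j)
  simp_rw [this]
  calc ∑ i : Fin d, ∑ j : Fin d, ∫ y, (hh δ (y i) - mm δ) * (hh δ (y j) - mm δ) ∂(Pd d)
      ≤ ∑ i : Fin d, ∑ j : Fin d, (if i = j then (1:ℝ) else 0) := by
        refine Finset.sum_le_sum fun i _ => Finset.sum_le_sum fun j _ => ?_
        by_cases h : i = j
        · subst h
          simp only [if_pos rfl]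
          exact int_diag d δ hδ0 hδ1 i
        · rw [if_neg h, int_cross d δ i j h]
    _ = d := by simp

lemma cheb (d : ℕ) (hδ0 : 0 < δ) (hδ1 : δ ≤ 1) {t : ℝ} (ht : 0 < t) :
    (Pd d {y | t ≤ |gg d δ y - d * mm δ|}).toReal ≤ d / t^2 := by
  set f : (Fin d → ℝ) → ℝ := fun y => (gg d δ y - d * mm δ)^2 with hfdef
  have hf_meas : Measurable f := ((gg_meas d δ).sub measurable_const).pow measurable_const
  have habs : ∀ᵐ y ∂(Pd d), |gg d δ y - d * mm δ| ≤ d := by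
    filter_upwards [ae_Q d] with y hy
    rw [sum_phi]
    calc |∑ i, (hh δ (y i) - mm δ)| ≤ ∑ i, |hh δ (y i) - mm δ| :=
          Finset.abs_sum_le_sum_abs _ _
      _ ≤ ∑ _i : Fin d, (1:ℝ) := Finset.sum_le_sum fun i _ => phi_abs_le hδ0 hδ1 (hy i)
      _ = d := by simp
  have hint : Integrable f (Pd d) := by
    refine Integrable.mono' (integrable_const ((d:ℝ)^2)) hf_meas.aestronglyMeasurable ?_
    filter_upwards [habs] with y hy
    calc ‖f y‖ = |gg d δ y - d * mm δ|^2 := by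
          rw [Real.norm_eq_abs, hfdef, abs_of_nonneg (sq_nonneg _), sq_abs]
      _ ≤ (d:ℝ)^2 := pow_le_pow_left₀ (abs_nonneg _) hy 2
  have markov := mul_meas_ge_le_integral_of_nonneg
    (Eventually.of_forall (fun y => sq_nonneg (gg d δ y - d * mm δ))) hint (t^2)
  have hsub : {y | t ≤ |gg d δ y - (d:ℝ) * mm δ|} ⊆ {y | t^2 ≤ f y} := by
    intro y hy
    simp only [Set.mem_setOf_eq] at hy ⊢
    calc t^2 ≤ |gg d δ y - d * mm δ|^2 := pow_le_pow_left₀ ht.le hy 2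
      _ = f y := by rw [sq_abs]
  have hmono : (Pd d {y | t ≤ |gg d δ y - (d:ℝ) * mm δ|}).toReal
      ≤ (Pd d {y | t^2 ≤ f y}).toReal :=
    ENNReal.toReal_mono (measure_ne_top _ _) (measure_mono hsub)
  have hvb := var_bound d hδ0 hδ1
  rw [le_div_iff₀ (by positivity : (0:ℝ) < t^2)]
  calc (Pd d {y | t ≤ |gg d δ y - (d:ℝ) * mm δ|}).toReal * t^2
      ≤ (Pd d {y | t^2 ≤ f y}).toReal * t^2 := by nlinarith [sq_nonneg t]
    _ = t^2 * (Pd d {y | t^2 ≤ f y}).toReal := by ring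
    _ ≤ ∫ y, f y ∂(Pd d) := markov
    _ ≤ d := hvb

def SS (d : ℕ) (δ r : ℝ) : Set (Fin d → ℝ) :=
  {y | ∃ ε : Fin d → ℝ, (∀ i, ε i = 1 ∨ ε i = -1) ∧ Even {i | ε i = -1}.ncard ∧
        ∑ i, (y i - δ * ε i)^2 ≤ r^2}

lemma SS_meas (d : ℕ) (δ r : ℝ) : MeasurableSet (SS d δ r) := by
  have hrw : SS d δ r = ⋃ ε ∈ {ε : Fin d → ℝ | (∀ i, ε i = 1 ∨ ε i = -1)
      ∧ Even {i | ε i = -1}.ncard}, {y : Fin d → ℝ | ∑ i, (y i - δ * ε i)^2 ≤ r^2} := by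
    ext y
    simp only [SS, Set.mem_setOf_eq, Set.mem_iUnion, exists_prop]
    tauto
  rw [hrw]
  have hfin : {ε : Fin d → ℝ | (∀ i, ε i = 1 ∨ ε i = -1)
      ∧ Even {i | ε i = -1}.ncard}.Finite := by
    refine Set.Finite.subset (Set.Finite.pi (fun _ : Fin d => (Set.finite_singleton (-1:ℝ)).insert 1)) ?_
    intro ε hε
    rw [Set.mem_pi]
    intro i _
    rcases hε.1 i with h | h <;> simp [h]
  refine Set.Finite.measurableSet_biUnion hfin fun ε _ => ?_
  have : Continuous fun y : Fin d → ℝ => ∑ i, (y i - δ * ε i)^2 := by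
    apply continuous_finset_sum
    intro i _
    exact ((continuous_apply i).sub continuous_const).pow 2
  exact this.measurable measurableSet_Iic

lemma restrict_Q (d : ℕ) :
    (volume : Measure (Fin d → ℝ)).restrict (Q d) = (2^d : ENNReal) • Pd d := by
  have hA : Measure.pi (fun _ : Fin d => (volume : Measure ℝ).restrict (Set.Icc (-1) 1))
      = (volume : Measure (Fin d → ℝ)).restrict (Q d) := by
    refine Measure.pi_eq fun s hs => ?_
    rw [Measure.restrict_apply (MeasurableSet.univ_pi hs)]
    have : Set.pi Set.univ s ∩ Q d = Set.pi Set.univ (fun i => s i ∩ Set.Icc (-1) 1) := by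
      unfold Q
      rw [← Set.pi_inter_distrib]
    rw [this, volume_pi_pi]
    exact Finset.prod_congr rfl fun i _ =>
      (Measure.restrict_apply (hs i)).symm
  have hB : Measure.pi (fun _ : Fin d => (volume : Measure ℝ).restrict (Set.Icc (-1) 1))
      = (2^d : ENNReal) • Pd d := by
    refine Measure.pi_eq fun s hs => ?_
    rw [Measure.smul_apply]
    unfold Pd
    rw [Measure.pi_pi, smul_eq_mul]
    have : ∀ i : Fin d, (volume : Measure ℝ).restrict (Set.Icc (-1) 1) (s i)
        = 2 * P1 (s i) := by
      intro i
      unfold P1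
      rw [Measure.smul_apply, smul_eq_mul, ← mul_assoc,
        ENNReal.mul_inv_cancel (by norm_num) (by norm_num), one_mul]
    rw [Finset.prod_congr rfl fun i _ => this i, Finset.prod_mul_distrib,
      Finset.prod_const, Finset.card_univ, Fintype.card_fin]
  rw [← hA, hB]

lemma cube_inter_eq (d : ℕ) (δ : ℝ) {r : ℝ} (hr : 0 ≤ r) :
    cube d ∩ ⋃ z ∈ design d δ, Metric.closedBall z r
      = (MeasurableEquiv.toLp 2 (Fin d → ℝ)).symm ⁻¹' (Q d ∩ SS d δ r) := by
  ext x
  simp only [Set.mem_inter_iff, Set.mem_preimage, Set.mem_iUnion, exists_prop]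
  constructor
  · rintro ⟨hc, z, ⟨ε, hε1, hε2, hz⟩, hball⟩
    obtain rfl : z = WithLp.toLp 2 (fun i => δ * ε i) := by rw [← hz]
    refine ⟨fun i _ => hc i, ε, hε1, hε2, ?_⟩
    rw [Metric.mem_closedBall, EuclideanSpace.dist_eq, Real.sqrt_le_left hr] at hball
    simpa [Real.dist_eq, sq_abs] using hball
  · rintro ⟨hQ, ε, hε1, hε2, hsum⟩
    refine ⟨fun i => hQ i (Set.mem_univ i), WithLp.toLp 2 (fun i => δ * ε i), ⟨ε, hε1, hε2, rfl⟩, ?_⟩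
    rw [Metric.mem_closedBall, EuclideanSpace.dist_eq, Real.sqrt_le_left hr]
    simpa [Real.dist_eq, sq_abs] using hsum

lemma cover_eq (d : ℕ) (δ : ℝ) {r : ℝ} (hr : 0 ≤ r) :
    cover d (design d δ) r = (Pd d (SS d δ r)).toReal := by
  unfold cover
  rw [cube_inter_eq d δ hr]
  rw [(EuclideanSpace.volume_preserving_symm_measurableEquiv_toLp (Fin d)).measure_preimage
    ((Q_meas d).inter (SS_meas d δ r)).nullMeasurableSet]
  have h1 : (volume : Measure (Fin d → ℝ)) (Q d ∩ SS d δ r)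
      = (2^d : ENNReal) * Pd d (SS d δ r) := by
    rw [Set.inter_comm, ← Measure.restrict_apply (SS_meas d δ r), restrict_Q,
      Measure.smul_apply, smul_eq_mul]
  rw [h1, ENNReal.toReal_mul]
  rw [show ((2:ENNReal)^d).toReal = (2:ℝ)^d by simp]
  rw [mul_div_assoc]
  field_simp

lemma SS_subset_g (d : ℕ) {δ : ℝ} (hδ0 : 0 ≤ δ) (r : ℝ) :
    SS d δ r ⊆ {y | gg d δ y ≤ r^2} := by
  rintro y ⟨ε, hε1, _, hsum⟩
  refine le_trans (Finset.sum_le_sum fun i _ => ?_) hsum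
  have hle : ε i * y i ≤ |y i| := by
    rcases hε1 i with h | h <;> rw [h]
    · simpa using le_abs_self (y i)
    · simpa using neg_le_abs (y i)
  have hsq : ε i ^ 2 = 1 := by rcases hε1 i with h | h <;> rw [h] <;> norm_num
  have h2 : δ^2 * ε i^2 = δ^2 := by rw [hsq, mul_one]
  unfold hh
  nlinarith [sq_abs (y i), mul_nonneg hδ0 (sub_nonneg.2 hle), h2]

lemma Q_subset_SS (d : ℕ) {δ r : ℝ} (hδ0 : 0 < δ) (hδ1 : δ ≤ 1) (hr : 4 * d ≤ r^2) :
    Q d ⊆ SS d δ r := by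
  intro y hy
  refine ⟨fun _ => 1, fun i => Or.inl rfl, ?_, ?_⟩
  · rw [show {i : Fin d | (1:ℝ) = -1} = ∅ from by ext i; norm_num]
    simp
  have : ∀ i : Fin d, (y i - δ * 1)^2 ≤ 4 := by
    intro i
    have h1 := (hy i (Set.mem_univ i)).1
    have h2 := (hy i (Set.mem_univ i)).2
    nlinarith
  calc ∑ i, (y i - δ * 1)^2 ≤ ∑ _i : Fin d, (4:ℝ) := Finset.sum_le_sum fun i _ => this i
    _ = 4 * d := by simp [mul_comm]
    _ ≤ r^2 := hr

lemma g_subset_SS (d : ℕ) {δ r : ℝ} (hδ0 : 0 < δ) (hδ1 : δ ≤ 1) (hd : 0 < d) :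
    Q d ∩ {y | gg d δ y + 4 * δ ≤ r^2} ⊆ SS d δ r := by
  rintro y ⟨hQ, hg⟩
  simp only [Set.mem_setOf_eq] at hg
  set σ : Fin d → ℝ := fun i => if y i < 0 then -1 else 1 with hσ
  have hσ1 : ∀ i, σ i = 1 ∨ σ i = -1 := by
    intro i; by_cases h : y i < 0 <;> simp [hσ, h]
  have hterm : ∀ i, (y i - δ * σ i)^2 = hh δ (y i) := by
    intro i
    by_cases h : y i < 0
    · simp only [hσ, if_pos h, hh]
      rw [abs_of_neg h]; ring
    · simp only [hσ, if_neg h, hh]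
      rw [abs_of_nonneg (not_lt.mp h)]; ring
  have hsumσ : ∑ i, (y i - δ * σ i)^2 = gg d δ y := by
    unfold gg; exact Finset.sum_congr rfl fun i _ => hterm i
  by_cases hpar : Even {i | σ i = -1}.ncard
  · exact ⟨σ, hσ1, hpar, by rw [hsumσ]; nlinarith⟩
  · set i0 : Fin d := ⟨0, hd⟩
    set ε : Fin d → ℝ := Function.update σ i0 (-σ i0) with hε
    have hε1 : ∀ i, ε i = 1 ∨ ε i = -1 := by
      intro i
      by_cases h : i = i0
      · subst h
        rw [hε, Function.update_self]
        rcases hσ1 i0 with h' | h' <;> rw [h'] <;> [right; left] <;> norm_num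
      · rw [hε, Function.update_of_ne h]
        exact hσ1 i
    have habs : σ i0 * y i0 = |y i0| := by
      by_cases h : y i0 < 0
      · rw [hσ]; simp only [if_pos h]; rw [abs_of_neg h]; ring
      · rw [hσ]; simp only [if_neg h]; rw [abs_of_nonneg (not_lt.mp h)]; ring
    have hpar2 : Even {i | ε i = -1}.ncard := by
      rcases hσ1 i0 with h' | h'
      · -- σ i0 = 1, flipping adds i0
        have hset : {i | ε i = -1} = insert i0 {i | σ i = -1} := by
          ext j
          by_cases h : j = i0
          · subst h
            simp [hε, Function.update_self, h', Set.mem_insert_iff]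
          · simp only [Set.mem_setOf_eq, hε, Function.update_of_ne h, Set.mem_insert_iff]
            tauto
        have hi0 : i0 ∉ {i | σ i = -1} := by
          simp only [Set.mem_setOf_eq, h']; norm_num
        rw [hset, Set.ncard_insert_of_notMem hi0 (Set.toFinite _)]
        exact (Nat.not_even_iff_odd.mp hpar).add_one
      · -- σ i0 = -1, flipping removes i0
        have hset : {i | ε i = -1} = {i | σ i = -1} \ {i0} := by
          ext j
          by_cases h : j = i0
          · subst h
            simp [hε, Function.update_self, h']
            all_goals norm_num
          · simp only [Set.mem_setOf_eq, hε, Function.update_of_ne h, Set.mem_diff,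
              Set.mem_singleton_iff]
            tauto
        have hi0 : i0 ∈ {i | σ i = -1} := h'
        rw [hset, Set.ncard_diff_singleton_of_mem hi0]
        exact Nat.Odd.sub_odd (Nat.not_even_iff_odd.mp hpar) odd_one
    refine ⟨ε, hε1, hpar2, ?_⟩
    have hsum2 : ∑ i, (y i - δ * ε i)^2
        = gg d δ y + 4 * δ * |y i0| := by
      rw [← Finset.add_sum_erase Finset.univ _ (Finset.mem_univ i0),
        ← hsumσ, ← Finset.add_sum_erase Finset.univ (fun i => (y i - δ * σ i)^2)
          (Finset.mem_univ i0)]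
      have he : ∀ i ∈ Finset.univ.erase i0, (y i - δ * ε i)^2 = (y i - δ * σ i)^2 := by
        intro i hi
        rw [hε, Function.update_of_ne (Finset.mem_erase.mp hi).1]
      rw [Finset.sum_congr rfl he]
      have : (y i0 - δ * ε i0)^2 = (y i0 - δ * σ i0)^2 + 4 * δ * (σ i0 * y i0) := by
        rw [hε, Function.update_self]
        rcases hσ1 i0 with h' | h' <;> rw [h'] <;> ring
      rw [this, habs]; ring
    rw [hsum2]
    have hy1 : |y i0| ≤ 1 := abs_le.mpr ⟨(hQ i0 (Set.mem_univ i0)).1, (hQ i0 (Set.mem_univ i0)).2⟩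
    nlinarith

variable {γ δ : ℝ}

lemma T_nonempty (d : ℕ) (hγ0 : 0 < γ) (hδ0 : 0 < δ) (hδ1 : δ ≤ 1) :
    ∃ r, 0 ≤ r ∧ 1 - γ ≤ cover d (design d δ) r := by
  refine ⟨Real.sqrt (4 * d), Real.sqrt_nonneg _, ?_⟩
  rw [cover_eq d δ (Real.sqrt_nonneg _)]
  have hsub : Q d ⊆ SS d δ (Real.sqrt (4 * d)) :=
    Q_subset_SS d hδ0 hδ1 (by rw [Real.sq_sqrt (by positivity)])
  have h1 : Pd d (SS d δ (Real.sqrt (4 * d))) = 1 := by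
    refine le_antisymm prob_le_one ?_
    rw [← Pd_Q d]
    exact measure_mono hsub
  rw [h1]
  norm_num
  linarith

lemma rcov_nonneg (d : ℕ) (hγ0 : 0 < γ) (hδ0 : 0 < δ) (hδ1 : δ ≤ 1) : 0 ≤ rcov d δ γ :=
  le_csInf (T_nonempty d hγ0 hδ0 hδ1) fun r hr => hr.1

lemma B_meas (d : ℕ) (δ t : ℝ) : MeasurableSet {y : Fin d → ℝ | t ≤ |gg d δ y - d * mm δ|} :=
  measurableSet_le measurable_const (((gg_meas d δ).sub measurable_const).abs)

lemma rcov_upper (hγ0 : 0 < γ) (hδ0 : 0 < δ) (hδ1 : δ ≤ 1) {ε : ℝ} (hε : 0 < ε) :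
    ∀ᶠ d : ℕ in atTop, rcov d δ γ ≤ Real.sqrt (d * (mm δ + ε)) := by
  obtain ⟨N1, hN1⟩ := exists_nat_gt (8 * δ / ε)
  obtain ⟨N2, hN2⟩ := exists_nat_gt (4 / (γ * ε^2))
  filter_upwards [eventually_ge_atTop (max 1 (max N1 N2))] with d hd
  have hd1 : 1 ≤ d := le_trans (le_max_left _ _) hd
  have hc1 : N1 ≤ d := le_trans (le_trans (le_max_left _ _) (le_max_right _ _)) hd
  have hc2 : N2 ≤ d := le_trans (le_trans (le_max_right _ _) (le_max_right _ _)) hd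
  have hdN1 : (8 * δ / ε) < d := lt_of_lt_of_le hN1 (by exact_mod_cast hc1)
  have hdN2 : (4 / (γ * ε^2)) < d := lt_of_lt_of_le hN2 (by exact_mod_cast hc2)
  have hdpos : (0:ℝ) < d := by exact_mod_cast hd1
  have hm := mm_mem δ hδ0 hδ1
  set r := Real.sqrt (d * (mm δ + ε)) with hrdef
  have hr0 : 0 ≤ r := Real.sqrt_nonneg _
  have hr2 : r^2 = d * (mm δ + ε) := Real.sq_sqrt (by nlinarith)
  -- covering bound
  have hcov : 1 - γ ≤ cover d (design d δ) r := by
    rw [cover_eq d δ hr0]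
    set B := {y : Fin d → ℝ | d * ε / 2 ≤ |gg d δ y - d * mm δ|} with hB
    have hsub : Q d ∩ Bᶜ ⊆ SS d δ r := by
      refine le_trans ?_ (g_subset_SS d hδ0 hδ1 (by omega))
      rintro y ⟨hQ, hyB⟩
      refine ⟨hQ, ?_⟩
      simp only [hB, Set.mem_compl_iff, Set.mem_setOf_eq, not_le] at hyB
      have h1 : gg d δ y ≤ d * mm δ + d * ε / 2 := by
        cases abs_lt.mp hyB with
        | intro h1 h2 => linarith
      have h2 : 4 * δ ≤ d * ε / 2 := by
        rw [div_lt_iff₀ hε] at hdN1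
        linarith
      simp only [Set.mem_setOf_eq, hr2]
      linarith
    have hPB : (Pd d B).toReal ≤ 4 / (d * ε^2) := by
      have := cheb d hδ0 hδ1 (t := d * ε / 2) (by positivity)
      calc (Pd d B).toReal ≤ d / (d * ε / 2)^2 := this
        _ = 4 / (d * ε^2) := by field_simp; ring
    have hcompl : Pd d ((Q d ∩ Bᶜ)ᶜ) ≤ Pd d B := by
      have : (Q d ∩ Bᶜ)ᶜ = (Q d)ᶜ ∪ B := by
        rw [Set.compl_inter, compl_compl]
      rw [this]
      refine le_trans (measure_union_le _ _) ?_
      have hQc : Pd d (Q d)ᶜ = 0 := by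
        rw [measure_compl (Q_meas d) (measure_ne_top _ _), Pd_Q, measure_univ, tsub_self]
      rw [hQc, zero_add]
    have hmeas : MeasurableSet (Q d ∩ Bᶜ) := (Q_meas d).inter (B_meas d δ _).compl
    have h1 : (1:ℝ) - (Pd d B).toReal ≤ (Pd d (SS d δ r)).toReal := by
      have e1 : Pd d ((Q d ∩ Bᶜ)ᶜ) = 1 - Pd d (Q d ∩ Bᶜ) := by
        rw [measure_compl hmeas (measure_ne_top _ _), measure_univ]
      have e2 : (Pd d (Q d ∩ Bᶜ)).toReal ≤ (Pd d (SS d δ r)).toReal :=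
        ENNReal.toReal_mono (measure_ne_top _ _) (measure_mono hsub)
      have e4 : (Pd d ((Q d ∩ Bᶜ)ᶜ)).toReal = 1 - (Pd d (Q d ∩ Bᶜ)).toReal := by
        rw [e1, ENNReal.toReal_sub_of_le prob_le_one (by norm_num)]
        simp
      have e5 := ENNReal.toReal_mono (measure_ne_top (Pd d) B) hcompl
      linarith
    have h2 : 4 / (d * ε^2) ≤ γ := by
      rw [div_lt_iff₀ (by positivity)] at hdN2
      rw [div_le_iff₀ (by positivity)]
      nlinarith
    linarith
  exact csInf_le ⟨0, fun x hx => hx.1⟩ ⟨hr0, hcov⟩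

lemma rcov_lower (hγ0 : 0 < γ) (hγ1 : γ < 1) (hδ0 : 0 < δ) (hδ1 : δ ≤ 1) {ε : ℝ}
    (hε : 0 < ε) (hεm : ε < mm δ) :
    ∀ᶠ d : ℕ in atTop, Real.sqrt (d * (mm δ - ε)) ≤ rcov d δ γ := by
  obtain ⟨N1, hN1⟩ := exists_nat_gt (1 / ((1 - γ) * ε^2))
  filter_upwards [eventually_ge_atTop (max 1 N1)] with d hd
  have hd1 : 1 ≤ d := le_trans (le_max_left _ _) hd
  have hdpos : (0:ℝ) < d := by exact_mod_cast hd1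
  have hc1 : N1 ≤ d := le_trans (le_max_right _ _) hd
  have hdN1 : (1 / ((1 - γ) * ε^2)) < d := lt_of_lt_of_le hN1 (by exact_mod_cast hc1)
  refine le_csInf (T_nonempty d hγ0 hδ0 hδ1) fun r hr => ?_
  by_contra hlt
  push_neg at hlt
  obtain ⟨hr0, hcov⟩ := hr
  have hr2 : r^2 < d * (mm δ - ε) := (Real.lt_sqrt hr0).mp hlt
  have hsub : SS d δ r ⊆ {y : Fin d → ℝ | d * ε ≤ |gg d δ y - d * mm δ|} := by
    refine le_trans (SS_subset_g d hδ0.le r) ?_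
    intro y hy
    simp only [Set.mem_setOf_eq] at hy ⊢
    have hge : gg d δ y ≤ d * mm δ - d * ε := by nlinarith
    have hde : 0 ≤ (d:ℝ) * ε := by positivity
    rw [abs_sub_comm, abs_of_nonneg (by linarith)]
    linarith
  have hPB := cheb d hδ0 hδ1 (t := d * ε) (by positivity)
  have hle : cover d (design d δ) r ≤ 1 / (d * ε^2) := by
    rw [cover_eq d δ hr0]
    calc (Pd d (SS d δ r)).toReal
        ≤ (Pd d {y : Fin d → ℝ | d * ε ≤ |gg d δ y - d * mm δ|}).toReal :=
          ENNReal.toReal_mono (measure_ne_top _ _) (measure_mono hsub)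
      _ ≤ d / (d * ε)^2 := hPB
      _ = 1 / (d * ε^2) := by field_simp
  have : 1 / (d * ε^2) < 1 - γ := by
    have hγ' : (0:ℝ) < 1 - γ := by linarith
    rw [div_lt_iff₀ (mul_pos hγ' (by positivity))] at hdN1
    rw [div_lt_iff₀ (by positivity)]
    nlinarith
  linarith

lemma sq_tendsto (hγ0 : 0 < γ) (hγ1 : γ < 1) (hδ0 : 0 < δ) (hδ1 : δ ≤ 1) :
    Tendsto (fun d : ℕ => (rcov d δ γ)^2 / d) atTop (𝓝 (mm δ)) := by
  have hm := (mm_mem δ hδ0 hδ1).1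
  rw [Metric.tendsto_atTop]
  intro η hη
  set ε := min (η/2) (mm δ / 2) with hεdef
  have hε0 : 0 < ε := lt_min (by linarith) (by linarith)
  have hεm : ε < mm δ := lt_of_le_of_lt (min_le_right _ _) (by linarith)
  have hεη : ε ≤ η / 2 := min_le_left _ _
  obtain ⟨N, hN⟩ := eventually_atTop.mp
    ((rcov_upper hγ0 hδ0 hδ1 hε0).and ((rcov_lower hγ0 hγ1 hδ0 hδ1 hε0 hεm).and
      (eventually_ge_atTop 1)))
  refine ⟨N, fun d hd => ?_⟩
  obtain ⟨h1, h2, h3⟩ := hN d hd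
  have hdpos : (0:ℝ) < d := by exact_mod_cast h3
  have h0 : 0 ≤ rcov d δ γ := rcov_nonneg d hγ0 hδ0 hδ1
  have hub2 : (rcov d δ γ)^2 ≤ d * (mm δ + ε) := by
    calc (rcov d δ γ)^2 ≤ (Real.sqrt (d * (mm δ + ε)))^2 := pow_le_pow_left₀ h0 h1 2
      _ = d * (mm δ + ε) := Real.sq_sqrt (by nlinarith)
  have hlb2 : (d:ℝ) * (mm δ - ε) ≤ (rcov d δ γ)^2 := by
    calc (d:ℝ) * (mm δ - ε) = (Real.sqrt (d * (mm δ - ε)))^2 :=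
          (Real.sq_sqrt (by nlinarith)).symm
      _ ≤ (rcov d δ γ)^2 := pow_le_pow_left₀ (Real.sqrt_nonneg _) h2 2
  have hle : (rcov d δ γ)^2 / d ≤ mm δ + ε := by
    rw [div_le_iff₀ hdpos]; linarith
  have hge : mm δ - ε ≤ (rcov d δ γ)^2 / d := by
    rw [le_div_iff₀ hdpos]; linarith
  rw [Real.dist_eq]
  calc |(rcov d δ γ)^2 / d - mm δ| ≤ ε := abs_le.mpr ⟨by linarith, by linarith⟩
    _ < η := by linarith

lemma div_sqrt_tendsto (hγ0 : 0 < γ) (hγ1 : γ < 1) (hδ0 : 0 < δ) (hδ1 : δ ≤ 1) :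
    Tendsto (fun d : ℕ => rcov d δ γ / Real.sqrt d) atTop (𝓝 (Real.sqrt (mm δ))) := by
  have hcomp : Tendsto (fun d : ℕ => Real.sqrt ((rcov d δ γ)^2 / d)) atTop
      (𝓝 (Real.sqrt (mm δ))) :=
    (Real.continuous_sqrt.continuousAt.tendsto).comp (sq_tendsto hγ0 hγ1 hδ0 hδ1)
  refine Tendsto.congr' ?_ hcomp
  filter_upwards with d
  rw [Real.sqrt_div (sq_nonneg _), Real.sqrt_sq (rcov_nonneg d hγ0 hδ0 hδ1)]

lemma pow_tendsto : Tendsto (fun d : ℕ => (2:ℝ) ^ (((d:ℝ)-1)/d)) atTop (𝓝 2) := by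
  have he : Tendsto (fun d : ℕ => ((d:ℝ)-1)/d) atTop (𝓝 1) := by
    have heq : (fun d : ℕ => ((d:ℝ)-1)/d) =ᶠ[atTop] fun d : ℕ => 1 - 1/(d:ℝ) := by
      filter_upwards [eventually_ge_atTop 1] with d hd
      have hne : (d:ℝ) ≠ 0 := by
        have : (0:ℝ) < d := by exact_mod_cast hd
        exact ne_of_gt this
      field_simp
    have h2 : Tendsto (fun d : ℕ => 1 - 1/(d:ℝ)) atTop (𝓝 1) := by
      have h3 : Tendsto (fun _ : ℕ => (1:ℝ)) atTop (𝓝 1) := tendsto_const_nhds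
      simpa using h3.sub tendsto_one_div_atTop_nhds_zero_nat
    exact h2.congr' heq.symm
  have hc : ContinuousAt (fun x : ℝ => (2:ℝ) ^ x) 1 := Real.continuousAt_const_rpow (by norm_num : (2:ℝ) ≠ 0)
  have := hc.tendsto.comp he
  simpa [Function.comp_def] using this

lemma main_tendsto (hγ0 : 0 < γ) (hγ1 : γ < 1) (hδ0 : 0 < δ) (hδ1 : δ ≤ 1) :
    Tendsto (fun d : ℕ => (2:ℝ) ^ (((d:ℝ)-1)/d) * rcov d δ γ / (2 * Real.sqrt d)) atTop
      (𝓝 (Real.sqrt (mm δ))) := by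
  have h1 : Tendsto (fun d : ℕ => ((2:ℝ) ^ (((d:ℝ)-1)/d) / 2) * (rcov d δ γ / Real.sqrt d))
      atTop (𝓝 ((2/2) * Real.sqrt (mm δ))) :=
    (pow_tendsto.div_const 2).mul (div_sqrt_tendsto hγ0 hγ1 hδ0 hδ1)
  have h2 : ((2:ℝ)/2) * Real.sqrt (mm δ) = Real.sqrt (mm δ) := by norm_num
  rw [h2] at h1
  refine Tendsto.congr' ?_ h1
  filter_upwards with d
  rw [div_mul_div_comm]

lemma sqrt_mm_eq : Real.sqrt (1/3 + (2*δ-1)^2) / 2 = Real.sqrt (mm δ) := by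
  have h4 : (1:ℝ)/3 + (2*δ-1)^2 = 4 * mm δ := by unfold mm; ring
  rw [h4, Real.sqrt_mul (by norm_num : (0:ℝ) ≤ 4),
    show Real.sqrt 4 = 2 by rw [show (4:ℝ) = 2^2 by norm_num, Real.sqrt_sq (by norm_num)]]
  ring_nf

lemma sqrt_third : Real.sqrt (1/3 : ℝ) = 1 / Real.sqrt 3 := by
  rw [one_div, one_div, ← Real.sqrt_inv]

lemma final_ineq : 1 / (2 * Real.sqrt 3) ≤ Real.sqrt (1/3 + (2*δ-1)^2) / 2 := by
  have h1 : (1:ℝ) / (2 * Real.sqrt 3) = Real.sqrt (1/3) / 2 := by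
    rw [sqrt_third]
    field_simp
  rw [h1]
  have := Real.sqrt_le_sqrt (by nlinarith [sq_nonneg (2*δ-1)] : (1:ℝ)/3 ≤ 1/3 + (2*δ-1)^2)
  linarith

lemma final_iff : Real.sqrt (1/3 + (2*δ-1)^2) / 2 = 1 / (2 * Real.sqrt 3) ↔ δ = 1/2 := by
  have h1 : (1:ℝ) / (2 * Real.sqrt 3) = Real.sqrt (1/3) / 2 := by
    rw [sqrt_third]; field_simp
  rw [h1]
  constructor
  · intro h
    have h2 : Real.sqrt (1/3 + (2*δ-1)^2) = Real.sqrt (1/3) := by linarith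
    have h3 : (1:ℝ)/3 + (2*δ-1)^2 = 1/3 := by
      have := (Real.sqrt_inj (by positivity) (by norm_num)).mp h2
      linarith [this]
    have h4 : (2*δ-1)^2 = 0 := by linarith
    have h5 : 2*δ-1 = 0 := by
      exact pow_eq_zero_iff (by norm_num) |>.mp h4
    linarith
  · intro h
    subst h
    norm_num

end S16

theorem stmt16 (γ δ : ℝ) (hγ0 : 0 < γ) (hγ1 : γ < 1) (hδ0 : 0 < δ) (hδ1 : δ ≤ 1) :
    Tendsto
        (fun d : ℕ =>
          (2 : ℝ) ^ (((d : ℝ) - 1) / d) * rcov d δ γ / (2 * Real.sqrt d)) atTop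
        (nhds (Real.sqrt (1 / 3 + (2 * δ - 1) ^ 2) / 2)) ∧
      1 / (2 * Real.sqrt 3) ≤ Real.sqrt (1 / 3 + (2 * δ - 1) ^ 2) / 2 ∧
      (Real.sqrt (1 / 3 + (2 * δ - 1) ^ 2) / 2 = 1 / (2 * Real.sqrt 3) ↔ δ = 1 / 2)   := by
  refine ⟨?_, ?_, ?_⟩
  · rw [show Real.sqrt (1 / 3 + (2 * δ - 1) ^ 2) / 2 = Real.sqrt (S16.mm δ) from
      S16.sqrt_mm_eq]
    exact S16.main_tendsto hγ0 hγ1 hδ0 hδ1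
  · exact S16.final_ineq
  · exact S16.final_iff

end
end
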